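/- For positive definite matrices A and B, the spectral geometric mean A ♮ B = (A^{-1} # B)^{1/2} A (A^{-1} # B)^{1/2} is a midpoint of A and B for the semi-metric d(X,Y) = 2‖log(X^{-1} # Y)‖: namely d(A, A ♮ B) = d(B, A ♮ B) = (1/2) d(A,B). -/

import Mathlib

open scoped Matrix.Norms.L2Operator ComplexOrder

variable {n : Type*} [Fintype n] [DecidableEq n]

/-- Real power of a (Hermitian) matrix via the continuous functional calculus. -/
noncomputable def mpow (A : Matrix n n ℂ) (t : ℝ) : Matrix n n ℂ :=
  cfc (fun x : ℝ => x ^ t) A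

/-- Matrix logarithm via the continuous functional calculus. -/
noncomputable def mlog (A : Matrix n n ℂ) : Matrix n n ℂ :=
  cfc Real.log A

/-- The geometric mean `A # B = A^{1/2} (A^{-1/2} B A^{-1/2})^{1/2} A^{1/2}`. -/
noncomputable def geo (A B : Matrix n n ℂ) : Matrix n n ℂ :=
  mpow A (1/2) * mpow (mpow A (-(1/2)) * B * mpow A (-(1/2))) (1/2) * mpow A (1/2)

/-- The weighted geometric mean `A #ₜ B = A^{1/2} (A^{-1/2} B A^{-1/2})^t A^{1/2}`. -/
noncomputable def wgeo (t : ℝ) (A B : Matrix n n ℂ) : Matrix n n ℂ :=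
  mpow A (1/2) * mpow (mpow A (-(1/2)) * B * mpow A (-(1/2))) t * mpow A (1/2)

/-- The weighted spectral geometric mean `A ♮ₜ B = (A⁻¹ # B)^t A (A⁻¹ # B)^t`. -/
noncomputable def sgeo (t : ℝ) (A B : Matrix n n ℂ) : Matrix n n ℂ :=
  mpow (geo A⁻¹ B) t * A * mpow (geo A⁻¹ B) t

/-- Semi-metric `d(A,B) = 2 ‖log (A⁻¹ # B)‖` (operator norm). -/
noncomputable def dsm (A B : Matrix n n ℂ) : ℝ :=
  2 * ‖mlog (geo A⁻¹ B)‖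

/-- Loewner order: `Loewner A B` means `A ≤ B`, i.e. `B - A` is positive semidefinite. -/
def Loewner (A B : Matrix n n ℂ) : Prop := (B - A).PosSemidef

open Matrix
set_option linter.unusedSectionVars false

lemma Matrix.PosDef.spec_pos {A : Matrix n n ℂ} (hA : A.PosDef) :
    ∀ x ∈ spectrum ℝ A, 0 < x := by
  intro x hx
  rw [Matrix.IsHermitian.spectrum_real_eq_range_eigenvalues hA.1] at hx
  obtain ⟨i, rfl⟩ := hx
  exact hA.eigenvalues_pos i
lemma Matrix.PosDef.sa {A : Matrix n n ℂ} (hA : A.PosDef) : _root_.IsSelfAdjoint A := hA.1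
lemma contOn (f : ℝ → ℝ) (A : Matrix n n ℂ) : ContinuousOn f (spectrum ℝ A) :=
  Set.Finite.continuousOn (Matrix.finite_real_spectrum (A := A)) f
lemma posDef_conj {M C : Matrix n n ℂ} (hM : M.PosDef) (hC : IsUnit C) :
    (C * M * Cᴴ).PosDef := by
  refine Matrix.PosDef.of_dotProduct_mulVec_pos ?_ fun x hx => ?_
  · have := hM.1
    unfold Matrix.IsHermitian at *
    simp [Matrix.conjTranspose_mul, this, mul_assoc]
  · have hx' : Cᴴ *ᵥ x ≠ 0 := by
      intro h
      apply hx
      have : Function.Injective (Cᴴ).mulVec :=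
        Matrix.mulVec_injective_iff_isUnit.2 (by simpa using hC)
      simpa using this (by simpa using h)
    have := hM.dotProduct_mulVec_pos hx'
    simpa [Matrix.star_mulVec, Matrix.dotProduct_mulVec, Matrix.vecMul_vecMul, mul_assoc,
      Matrix.mulVec_mulVec] using this
lemma cfc_posDef {A : Matrix n n ℂ} (hA : A.PosDef) {f : ℝ → ℝ}
    (hf : ∀ x ∈ spectrum ℝ A, 0 < f x) : (cfc f A).PosDef := by
  have hH : A.IsHermitian := hA.1
  rw [Matrix.IsHermitian.cfc_eq hH, Matrix.IsHermitian.cfc]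
  have hdiag : (Matrix.diagonal (RCLike.ofReal ∘ f ∘ hH.eigenvalues) :
      Matrix n n ℂ).PosDef := by
    rw [Matrix.posDef_diagonal_iff]
    intro i
    have : hH.eigenvalues i ∈ spectrum ℝ A := by
      rw [Matrix.IsHermitian.spectrum_real_eq_range_eigenvalues hH]; exact ⟨i, rfl⟩
    have := hf _ this
    simpa using Complex.zero_lt_real.mpr this
  have hU : IsUnit ((Matrix.IsHermitian.eigenvectorUnitary hH : Matrix n n ℂ)) := by
    apply Matrix.isUnit_iff_isUnit_det _ |>.2
    exact (Matrix.UnitaryGroup.det_isUnit _)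
  simpa [Matrix.star_eq_conjTranspose] using posDef_conj hdiag hU
lemma mpow_posDef {A : Matrix n n ℂ} (hA : A.PosDef) (t : ℝ) : (mpow A t).PosDef :=
  cfc_posDef hA fun x hx => Real.rpow_pos_of_pos (hA.spec_pos x hx) t
lemma mpow_mul_mpow {A : Matrix n n ℂ} (hA : A.PosDef) (a b : ℝ) :
    mpow A a * mpow A b = mpow A (a + b) := by
  rw [mpow, mpow, ← cfc_mul _ _ _ (contOn _ _) (contOn _ _)]
  exact cfc_congr fun x hx => (Real.rpow_add (hA.spec_pos x hx) a b).symm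
lemma mpow_zero {A : Matrix n n ℂ} (hA : A.PosDef) : mpow A 0 = 1 := by
  rw [mpow]
  calc cfc (fun x : ℝ => x ^ (0:ℝ)) A = cfc (fun _ : ℝ => (1:ℝ)) A :=
        cfc_congr fun x _ => Real.rpow_zero x
    _ = 1 := cfc_const_one ℝ A hA.sa
lemma mpow_one {A : Matrix n n ℂ} (hA : A.PosDef) : mpow A 1 = A := by
  rw [mpow]
  calc cfc (fun x : ℝ => x ^ (1:ℝ)) A = cfc (fun x : ℝ => x) A :=
        cfc_congr fun x _ => Real.rpow_one x
    _ = A := cfc_id' ℝ A hA.sa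
lemma mpow_mpow {A : Matrix n n ℂ} (hA : A.PosDef) (a b : ℝ) :
    mpow (mpow A a) b = mpow A (a * b) := by
  rw [mpow, mpow, mpow,
    ← cfc_comp' (fun x : ℝ => x ^ b) (fun x : ℝ => x ^ a) A
      (Set.Finite.continuousOn ((Matrix.finite_real_spectrum (A := A)).image _) _)
      (contOn _ _) hA.sa]
  exact cfc_congr fun x hx => (Real.rpow_mul (hA.spec_pos x hx).le a b).symm
lemma mlog_mpow {A : Matrix n n ℂ} (hA : A.PosDef) (t : ℝ) :
    mlog (mpow A t) = t • mlog A := by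
  rw [mlog, mpow, mlog,
    ← cfc_comp' Real.log (fun x : ℝ => x ^ t) A
      (Set.Finite.continuousOn ((Matrix.finite_real_spectrum (A := A)).image _) _)
      (contOn _ _) hA.sa,
    ← cfc_smul t Real.log A (contOn _ _)]
  exact cfc_congr fun x hx => by
    simp only [Function.comp_apply, smul_eq_mul]
    exact Real.log_rpow (hA.spec_pos x hx) t
lemma inv_eq_mpow {A : Matrix n n ℂ} (hA : A.PosDef) : A⁻¹ = mpow A (-1) := by
  apply Matrix.inv_eq_right_inv
  nth_rewrite 1 [← mpow_one hA]
  rw [mpow_mul_mpow hA]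
  norm_num [mpow_zero hA]
lemma mpow_inv {A : Matrix n n ℂ} (hA : A.PosDef) (t : ℝ) :
    mpow A⁻¹ t = mpow A (-t) := by
  rw [inv_eq_mpow hA, mpow_mpow hA]
  norm_num
lemma conj_mpow_posDef {A M : Matrix n n ℂ} (hA : A.PosDef) (hM : M.PosDef) (t : ℝ) :
    (mpow A t * M * mpow A t).PosDef := by
  have h := posDef_conj hM (mpow_posDef hA t).isUnit
  rwa [(mpow_posDef hA t).1.eq] at h
lemma geo_posDef {A B : Matrix n n ℂ} (hA : A.PosDef) (hB : B.PosDef) :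
    (geo A B).PosDef := by
  have h1 : (mpow A (-(1/2)) * B * mpow A (-(1/2))).PosDef := conj_mpow_posDef hA hB _
  exact conj_mpow_posDef hA (mpow_posDef h1 (1/2)) _
lemma sq_mpow_half {T : Matrix n n ℂ} (hT : T.PosDef) : mpow (T * T) (1/2) = T := by
  have h2 : T * T = mpow T 2 := by
    rw [show (2:ℝ) = 1 + 1 by norm_num, ← mpow_mul_mpow hT, mpow_one hT]
  rw [h2, mpow_mpow hT, show (2:ℝ) * (1/2) = 1 by norm_num, mpow_one hT]
lemma geo_inv_conj {X G : Matrix n n ℂ} (hX : X.PosDef) (hG : G.PosDef) :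
    geo X⁻¹ (G * X * G) = G := by
  rw [geo, mpow_inv hX (1/2), mpow_inv hX (-(1/2)), neg_neg]
  set s := mpow X (1/2) with hs
  set s' := mpow X (-(1/2)) with hs'
  set T : Matrix n n ℂ := s * G * s with hT
  have hTpd : T.PosDef := conj_mpow_posDef hX hG _
  have hX1 : s * s = X := by
    rw [hs, mpow_mul_mpow hX, show (1/2 : ℝ) + 1/2 = 1 by norm_num, mpow_one hX]
  have e1 : T * T = s * (G * (s * s) * G) * s := by rw [hT]; noncomm_ring
  have hinner : s * (G * X * G) * s = T * T := by rw [e1, hX1]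
  rw [hinner, sq_mpow_half hTpd, hT]
  have h0 : s' * s = 1 := by
    rw [hs, hs', mpow_mul_mpow hX, show (-(1/2) : ℝ) + 1/2 = 0 by norm_num, mpow_zero hX]
  have h0' : s * s' = 1 := by
    rw [hs, hs', mpow_mul_mpow hX, show (1/2 : ℝ) + -(1/2) = 0 by norm_num, mpow_zero hX]
  calc s' * (s * G * s) * s' = (s' * s) * G * (s * s') := by noncomm_ring
    _ = G := by rw [h0, h0', one_mul, mul_one]
lemma geo_riccati {A B : Matrix n n ℂ} (hA : A.PosDef) (hB : B.PosDef) :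
    geo A⁻¹ B * A * geo A⁻¹ B = B := by
  set s := mpow A (1/2) with hs
  set s' := mpow A (-(1/2)) with hs'
  set D : Matrix n n ℂ := s * B * s with hD
  have hDpd : D.PosDef := conj_mpow_posDef hA hB _
  set d := mpow D (1/2) with hd
  set G₀ : Matrix n n ℂ := s' * d * s' with hG₀
  have hdpd : d.PosDef := mpow_posDef hDpd _
  have hG₀pd : G₀.PosDef := conj_mpow_posDef hA hdpd _
  have h0 : s' * s = 1 := by
    rw [hs, hs', mpow_mul_mpow hA, show (-(1/2) : ℝ) + 1/2 = 0 by norm_num, mpow_zero hA]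
  have h0' : s * s' = 1 := by
    rw [hs, hs', mpow_mul_mpow hA, show (1/2 : ℝ) + -(1/2) = 0 by norm_num, mpow_zero hA]
  have h1 : s' * A * s' = 1 := by
    nth_rewrite 1 [← mpow_one hA]
    rw [hs', mpow_mul_mpow hA, show (-(1/2) : ℝ) + 1 = 1/2 by norm_num, mpow_mul_mpow hA,
      show (1/2 : ℝ) + -(1/2) = 0 by norm_num, mpow_zero hA]
  have h2 : d * d = D := by
    rw [hd, mpow_mul_mpow hDpd, show (1/2 : ℝ) + 1/2 = 1 by norm_num, mpow_one hDpd]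
  have key : G₀ * A * G₀ = B := by
    calc G₀ * A * G₀ = s' * d * (s' * A * s') * (d * s') := by rw [hG₀]; noncomm_ring
      _ = s' * (d * d) * s' := by rw [h1]; noncomm_ring
      _ = (s' * s) * B * (s * s') := by rw [h2, hD]; noncomm_ring
      _ = B := by rw [h0, h0', one_mul, mul_one]
  have : geo A⁻¹ B = G₀ := by
    conv_lhs => rw [← key]
    exact geo_inv_conj hA hG₀pd
  rw [this, key]

/-- the spectral geometric mean `A ♮ B` is a midpoint of `A`
and `B` for the semi-metric `d`. -/
theorem stmt11 (A B : Matrix n n ℂ) (hA : A.PosDef) (hB : B.PosDef) :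
    dsm A (sgeo (1/2) A B) = (1/2) * dsm A B ∧
    dsm B (sgeo (1/2) A B) = (1/2) * dsm A B := by
  set S := geo A⁻¹ B with hSdef
  have hS : S.PosDef := geo_posDef hA.inv hB
  have hric : S * A * S = B := geo_riccati hA hB
  set G := mpow S (1/2) with hG
  set G' := mpow S (-(1/2)) with hG'
  have hGS : G' * S = G := by
    nth_rewrite 1 [← mpow_one hS]
    rw [hG', hG, mpow_mul_mpow hS, show (-(1/2) : ℝ) + 1 = 1/2 by norm_num]
  have hSG : S * G' = G := by
    nth_rewrite 1 [← mpow_one hS]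
    rw [hG', hG, mpow_mul_mpow hS, show (1 : ℝ) + -(1/2) = 1/2 by norm_num]
  have hsgeo : sgeo (1/2) A B = G * A * G := rfl
  have hMA : geo A⁻¹ (G * A * G) = G := geo_inv_conj hA (mpow_posDef hS _)
  have hMB' : G' * B * G' = G * A * G := by
    conv_lhs => rw [← hric]
    calc G' * (S * A * S) * G' = (G' * S) * A * (S * G') := by noncomm_ring
      _ = G * A * G := by rw [hGS, hSG]
  have hMB : geo B⁻¹ (G * A * G) = G' := by
    conv_lhs => rw [← hMB']
    exact geo_inv_conj hB (mpow_posDef hS _)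
  have hnormA : ‖mlog G‖ = (1/2) * ‖mlog S‖ := by
    rw [hG, mlog_mpow hS, norm_smul]
    norm_num
  have hnormB : ‖mlog G'‖ = (1/2) * ‖mlog S‖ := by
    rw [hG', mlog_mpow hS, norm_smul]
    norm_num
  have hdAB : dsm A B = 2 * ‖mlog S‖ := rfl
  constructor
  · rw [dsm, hsgeo, hMA, hnormA, hdAB]; ring
  · rw [dsm, hsgeo, hMB, hnormB, hdAB]; ring
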